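/- arXiv:1210.4672 — 3 statements merged into one kernel-verified Lean document; each statement's English description precedes it below -/
import Mathlib

section
/- Let φ ∈ C²(ℝ) with c₁ < φ'(t) < c₂ for all t, and let t_m < t_{m+1} satisfy φ(t_m) = (m+1/2)π and φ(t_{m+1}) = (m+3/2)π. Suppose α ∈ C²(ℝ) satisfies: α(t_m) = α(t_{m+1}) = 0; |α''(t)| ≤ ε(2φ'(t) + α'(t)) for t ∈ [t_m, t_{m+1}]; |α(t') − α(t'')| < π for all t', t'' ∈ [t_m, t_{m+1}]; and ∫_{t_m}^{t_{m+1}} α'(u) du = 0. Then |α'(t)| ≤ 3πε for all t ∈ [t_m, t_{m+1}]. -/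
theorem stmt1 (ε c₁ c₂ : ℝ) (φ α : ℝ → ℝ) (m : ℤ) (tm tm1 : ℝ)
    (hε : 0 < ε)
    (hφ : ContDiff ℝ 2 φ)
    (hφ1 : ∀ t, c₁ < deriv φ t) (hφ2 : ∀ t, deriv φ t < c₂)
    (hα : ContDiff ℝ 2 α)
    (ht : tm < tm1)
    (hφm : φ tm = (m + 1 / 2) * Real.pi)
    (hφm1 : φ tm1 = (m + 3 / 2) * Real.pi)
    (hαm : α tm = 0) (hαm1 : α tm1 = 0)
    (hα'' : ∀ t ∈ Set.Icc tm tm1,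
      |deriv (deriv α) t| ≤ ε * (2 * deriv φ t + deriv α t))
    (hosc : ∀ t' ∈ Set.Icc tm tm1, ∀ t'' ∈ Set.Icc tm tm1, |α t' - α t''| < Real.pi)
    (hint : ∫ u in tm..tm1, deriv α u = 0) :
    ∀ t ∈ Set.Icc tm tm1, |deriv α t| ≤ 3 * Real.pi * ε := by
  have hπ := Real.pi_pos
  have hαd : Differentiable ℝ α := hα.differentiable (by norm_num)
  have hα1 : ContDiff ℝ 1 (deriv α) := by
    have h2 : ContDiff ℝ ((1 : ℕ) + 1) α := by exact_mod_cast hα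
    exact (contDiff_succ_iff_deriv.mp h2).2.2
  have hα'd : Differentiable ℝ (deriv α) := hα1.differentiable (by norm_num)
  have hα'c : Continuous (deriv α) := hα'd.continuous
  have hα''c : Continuous (deriv (deriv α)) := hα1.continuous_deriv le_rfl
  have hφd : Differentiable ℝ φ := hφ.differentiable (by norm_num)
  have hφ'c : Continuous (deriv φ) := hφ.continuous_deriv (by norm_num)
  -- the combined function g = 2φ' + α' and its antiderivative ψ = 2φ + α
  set g : ℝ → ℝ := fun u => 2 * deriv φ u + deriv α u with hg
  have hgc : Continuous g := (continuous_const.mul hφ'c).add hα'c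
  have hψ : ∀ a b : ℝ, (∫ u in a..b, g u) = (2 * φ b + α b) - (2 * φ a + α a) := by
    intro a b
    refine intervalIntegral.integral_eq_sub_of_hasDerivAt (f := fun u => 2 * φ u + α u) (f' := g) (fun x _ => ?_)
      (hgc.intervalIntegrable _ _)
    exact ((hφd x).hasDerivAt.const_mul 2).add (hαd x).hasDerivAt
  have hgnn : ∀ t ∈ Set.Icc tm tm1, 0 ≤ g t := by
    intro t htI
    have h := hα'' t htI
    have h0 := abs_nonneg (deriv (deriv α) t)
    simp only [hg]
    nlinarith
  -- nonnegativity of ∫ g over subintervals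
  have hsub : ∀ a ∈ Set.Icc tm tm1, ∀ b ∈ Set.Icc tm tm1, a ≤ b →
      0 ≤ (2 * φ b + α b) - (2 * φ a + α a) := by
    intro a ha b hb hab
    rw [← hψ]
    refine intervalIntegral.integral_nonneg hab (fun u hu => hgnn u ?_)
    exact ⟨le_trans ha.1 hu.1, le_trans hu.2 hb.2⟩
  have htotal : (2 * φ tm1 + α tm1) - (2 * φ tm + α tm) = 2 * Real.pi := by
    rw [hφm, hφm1, hαm, hαm1]; ring
  -- key estimate
  have key : ∀ a ∈ Set.Icc tm tm1, ∀ b ∈ Set.Icc tm tm1, a ≤ b →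
      |deriv α b - deriv α a| ≤ 2 * Real.pi * ε := by
    intro a ha b hb hab
    have hftc : (∫ u in a..b, deriv (deriv α) u) = deriv α b - deriv α a :=
      intervalIntegral.integral_deriv_eq_sub (fun x _ => hα'd x)
        (hα''c.intervalIntegrable _ _)
    have h1 : |∫ u in a..b, deriv (deriv α) u| ≤ ∫ u in a..b, |deriv (deriv α) u| :=
      intervalIntegral.abs_integral_le_integral_abs hab
    have h2 : (∫ u in a..b, |deriv (deriv α) u|) ≤ ∫ u in a..b, ε * g u := by
      refine intervalIntegral.integral_mono_on hab
        ((hα''c.abs).intervalIntegrable _ _) ((continuous_const.mul hgc).intervalIntegrable _ _)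
        (fun x hx => hα'' x ⟨le_trans ha.1 hx.1, le_trans hx.2 hb.2⟩)
    have h3 : (∫ u in a..b, ε * g u) = ε * ((2 * φ b + α b) - (2 * φ a + α a)) := by
      rw [intervalIntegral.integral_const_mul, hψ]
    have h4 : (2 * φ b + α b) - (2 * φ a + α a) ≤ 2 * Real.pi := by
      have l1 := hsub tm ⟨le_refl _, ht.le⟩ a ha ha.1
      have l2 := hsub b hb tm1 ⟨ht.le, le_refl _⟩ hb.2
      linarith [htotal]
    calc |deriv α b - deriv α a| = |∫ u in a..b, deriv (deriv α) u| := by rw [hftc]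
      _ ≤ ∫ u in a..b, |deriv (deriv α) u| := h1
      _ ≤ ∫ u in a..b, ε * g u := h2
      _ = ε * ((2 * φ b + α b) - (2 * φ a + α a)) := h3
      _ ≤ ε * (2 * Real.pi) := by nlinarith
      _ = 2 * Real.pi * ε := by ring
  -- existence of a zero of α' in the interval
  obtain ⟨t₀, ht₀, hz⟩ : ∃ t₀ ∈ Set.Icc tm tm1, deriv α t₀ = 0 := by
    by_contra h
    push_neg at h
    -- α' has constant sign on Icc tm tm1
    have hsign : (∀ t ∈ Set.Icc tm tm1, 0 < deriv α t) ∨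
        (∀ t ∈ Set.Icc tm tm1, deriv α t < 0) := by
      by_contra hc
      push_neg at hc
      obtain ⟨⟨x, hx, hxle⟩, ⟨y, hy, hyle⟩⟩ := hc
      have hxneg : deriv α x < 0 := lt_of_le_of_ne hxle (h x hx)
      have hypos : 0 < deriv α y := lt_of_le_of_ne hyle (Ne.symm (h y hy))
      have hmem : (0 : ℝ) ∈ Set.uIcc (deriv α x) (deriv α y) :=
        Set.mem_uIcc.mpr (Or.inl ⟨hxneg.le, hypos.le⟩)
      have := intermediate_value_uIcc (hα'c.continuousOn (s := Set.uIcc x y)) hmem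
      obtain ⟨z, hz1, hz2⟩ := this
      have hzI : z ∈ Set.Icc tm tm1 := by
        rcases Set.mem_uIcc.mp hz1 with h' | h'
        · exact ⟨le_trans hx.1 h'.1, le_trans h'.2 hy.2⟩
        · exact ⟨le_trans hy.1 h'.1, le_trans h'.2 hx.2⟩
      exact h z hzI hz2
    rcases hsign with hp | hn
    · have : 0 < ∫ u in tm..tm1, deriv α u :=
        intervalIntegral.intervalIntegral_pos_of_pos_on (hα'c.intervalIntegrable _ _)
          (fun x hx => hp x ⟨hx.1.le, hx.2.le⟩) ht
      linarith [hint ▸ this]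
    · have : 0 < ∫ u in tm..tm1, -deriv α u :=
        intervalIntegral.intervalIntegral_pos_of_pos_on ((hα'c.neg).intervalIntegrable _ _)
          (fun x hx => neg_pos.mpr (hn x ⟨hx.1.le, hx.2.le⟩)) ht
      rw [intervalIntegral.integral_neg, hint, neg_zero] at this
      exact lt_irrefl 0 this
  intro t htI
  have h2π3π : 2 * Real.pi * ε ≤ 3 * Real.pi * ε := by nlinarith
  rcases le_total t₀ t with hle | hle
  · have := key t₀ ht₀ t htI hle
    rw [hz, sub_zero] at this
    linarith
  · have := key t htI t₀ ht₀ hle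
    rw [hz, zero_sub, abs_neg] at this
    linarith
end

section
/- Let ψ be a Schwartz function with ψ̂ supported in [1−Δ, 1+Δ], 0 < Δ < 1. Let A > 0, φ₀, ω ∈ ℝ with ω > 0, and consider the harmonic signal h(t) = A cos(φ₀ + 2πωt). Then for all a > 0 and b ∈ ℝ, the continuous wavelet transform W_h(a,b) = ∫ h(t) a^{−1/2} \overline{ψ((t−b)/a)} dt equals (A/2) e^{i(φ₀ + 2πωb)} √a \overline{ψ̂(aω)}. -/
open MeasureTheory Real Complex in
private lemma conjFourier (ψ : SchwartzMap ℝ ℂ) (ξ : ℝ) :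
    (∫ s : ℝ, Complex.exp (((2 * Real.pi * ξ * s : ℝ) : ℂ) * Complex.I) * (starRingEnd ℂ) (ψ s)) =
      (starRingEnd ℂ) (FourierTransform.fourier (⇑ψ : ℝ → ℂ) ξ) := by
  rw [Real.fourier_real_eq_integral_exp_smul, ← integral_conj]
  congr 1
  ext s
  rw [smul_eq_mul, map_mul, ← Complex.exp_conj]
  congr 2
  simp only [map_mul, Complex.conj_ofReal, Complex.conj_I]
  push_cast
  ring

open MeasureTheory in
private lemma intConjψ (ψ : SchwartzMap ℝ ℂ) :
    Integrable (fun s : ℝ => (starRingEnd ℂ) (ψ s)) := by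
  refine Integrable.mono' ψ.integrable.norm
    ((Complex.continuous_conj.comp ψ.continuous).aestronglyMeasurable) ?_
  filter_upwards with s
  simp

open MeasureTheory in
private lemma intExpConj (ψ : SchwartzMap ℝ ℂ) (c : ℝ) :
    Integrable (fun s : ℝ => Complex.exp (((c * s : ℝ) : ℂ) * Complex.I) * (starRingEnd ℂ) (ψ s)) := by
  refine (intConjψ ψ).bdd_mul (c := 1) ?_ (Filter.Eventually.of_forall fun s => ?_)
  · exact (Complex.continuous_exp.comp (by continuity)).aestronglyMeasurable
  · simp [Complex.norm_exp]

open MeasureTheory Real Complex in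
private lemma cosInt (ψ : SchwartzMap ℝ ℂ) (A θ ξ : ℝ) :
    (∫ s : ℝ, ((A * Real.cos (θ + 2 * Real.pi * ξ * s) : ℝ) : ℂ) * (starRingEnd ℂ) (ψ s))
      = (A / 2) * Complex.exp ((θ : ℂ) * Complex.I) *
          (starRingEnd ℂ) (FourierTransform.fourier (⇑ψ : ℝ → ℂ) ξ)
        + (A / 2) * Complex.exp (-(θ : ℂ) * Complex.I) *
          (starRingEnd ℂ) (FourierTransform.fourier (⇑ψ : ℝ → ℂ) (-ξ)) := by
  have h : ∀ s : ℝ, ((A * Real.cos (θ + 2 * Real.pi * ξ * s) : ℝ) : ℂ) * (starRingEnd ℂ) (ψ s)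
      = ((A : ℂ) / 2) * Complex.exp ((θ : ℂ) * Complex.I) *
          (Complex.exp (((2 * Real.pi * ξ * s : ℝ) : ℂ) * Complex.I) * (starRingEnd ℂ) (ψ s))
        + ((A : ℂ) / 2) * Complex.exp (-(θ : ℂ) * Complex.I) *
          (Complex.exp (((2 * Real.pi * (-ξ) * s : ℝ) : ℂ) * Complex.I) * (starRingEnd ℂ) (ψ s)) := by
    intro s
    have e1 : ((θ + 2 * Real.pi * ξ * s : ℝ) : ℂ) * Complex.I
        = (θ : ℂ) * Complex.I + ((2 * Real.pi * ξ * s : ℝ) : ℂ) * Complex.I := by push_cast; ring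
    have e2 : -(((θ + 2 * Real.pi * ξ * s : ℝ) : ℂ)) * Complex.I
        = -(θ : ℂ) * Complex.I + ((2 * Real.pi * (-ξ) * s : ℝ) : ℂ) * Complex.I := by push_cast; ring
    rw [Complex.ofReal_mul, Complex.ofReal_cos, Complex.cos, e1, e2, Complex.exp_add,
      Complex.exp_add]
    ring
  simp_rw [h]
  rw [integral_add ((intExpConj ψ (2 * Real.pi * ξ)).const_mul _)
      ((intExpConj ψ (2 * Real.pi * (-ξ))).const_mul _),
    integral_const_mul, integral_const_mul, conjFourier, conjFourier]

theorem stmt9 (Δ A φ₀ ω : ℝ) (ψ : SchwartzMap ℝ ℂ)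
    (hΔ0 : 0 < Δ) (hΔ1 : Δ < 1)
    (hsupp : Function.support (FourierTransform.fourier (⇑ψ : ℝ → ℂ)) ⊆ Set.Icc (1 - Δ) (1 + Δ))
    (hA : 0 < A) (hω : 0 < ω) :
    ∀ a : ℝ, 0 < a → ∀ b : ℝ,
      (∫ t : ℝ, (↑(A * Real.cos (φ₀ + 2 * Real.pi * ω * t)) : ℂ) *
          (↑(Real.sqrt a))⁻¹ * (starRingEnd ℂ) (ψ ((t - b) / a)))
        = (↑A / 2) * Complex.exp (Complex.I * ↑(φ₀ + 2 * Real.pi * ω * b)) *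
          ↑(Real.sqrt a) * (starRingEnd ℂ) (FourierTransform.fourier (⇑ψ : ℝ → ℂ) (a * ω)) := by
  intro a ha b
  set θ : ℝ := φ₀ + 2 * Real.pi * ω * b with hθ
  set F : ℝ → ℂ := fun s =>
    ((A * Real.cos (θ + 2 * Real.pi * (a * ω) * s) : ℝ) : ℂ) * (↑(Real.sqrt a))⁻¹ *
      (starRingEnd ℂ) (ψ s) with hF
  have hzero : FourierTransform.fourier (⇑ψ : ℝ → ℂ) (-(a * ω)) = 0 := by
    by_contra h
    have := hsupp (Function.mem_support.mpr h)
    have h1 : (0:ℝ) < a * ω := mul_pos ha hω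
    have := this.1
    nlinarith
  have harg : ∀ t : ℝ, θ + 2 * Real.pi * (a * ω) * ((t - b) / a) = φ₀ + 2 * Real.pi * ω * t := by
    intro t
    rw [hθ]
    field_simp
    ring
  have hfun : ∀ t : ℝ, (↑(A * Real.cos (φ₀ + 2 * Real.pi * ω * t)) : ℂ) *
      (↑(Real.sqrt a))⁻¹ * (starRingEnd ℂ) (ψ ((t - b) / a)) = F ((t - b) / a) := by
    intro t
    simp only [hF]
    rw [harg t]
  have hstep : (∫ t : ℝ, (↑(A * Real.cos (φ₀ + 2 * Real.pi * ω * t)) : ℂ) *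
          (↑(Real.sqrt a))⁻¹ * (starRingEnd ℂ) (ψ ((t - b) / a))) = |a| • ∫ s : ℝ, F s := by
    calc (∫ t : ℝ, (↑(A * Real.cos (φ₀ + 2 * Real.pi * ω * t)) : ℂ) *
          (↑(Real.sqrt a))⁻¹ * (starRingEnd ℂ) (ψ ((t - b) / a)))
        = ∫ t : ℝ, F ((t - b) / a) := by simp_rw [hfun]
      _ = ∫ t : ℝ, F (t / a) := MeasureTheory.integral_sub_right_eq_self (fun t => F (t / a)) b
      _ = |a| • ∫ s : ℝ, F s := MeasureTheory.Measure.integral_comp_div F a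
  rw [hstep]
  have hFval : (∫ s : ℝ, F s) = (↑(Real.sqrt a))⁻¹ *
      ∫ s : ℝ, ((A * Real.cos (θ + 2 * Real.pi * (a * ω) * s) : ℝ) : ℂ) * (starRingEnd ℂ) (ψ s) := by
    rw [← MeasureTheory.integral_const_mul]
    congr 1
    ext s
    simp only [hF]
    ring
  rw [hFval, cosInt, hzero]
  simp only [map_zero, mul_zero, add_zero]
  rw [abs_of_pos ha]
  have hsa : (Real.sqrt a : ℂ) ≠ 0 := by
    simpa using (Real.sqrt_pos.mpr ha).ne'
  have haa : ((a : ℂ)) = (Real.sqrt a : ℂ) * (Real.sqrt a : ℂ) := by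
    rw [← Complex.ofReal_mul, Real.mul_self_sqrt ha.le]
  rw [show Complex.I * (θ:ℂ) = (θ:ℂ) * Complex.I from mul_comm _ _, Complex.real_smul, haa]
  field_simp
end

section
/- Let φ ∈ C²(ℝ) with c₁ < φ'(t) < c₂ and |φ''(t)| ≤ ε φ'(t), and let ψ be a Schwartz function. Fix b ∈ ℝ, a > 0, and j ∈ {0, 1, 2}. Write ψ^{(j)}_{a,b}(x) = a^{−(j+1/2)} ψ^{(j)}((x−b)/a). Then ∫_ℝ |cos(2πφ(t)) − cos(2π(φ(b) − bφ'(b)) + 2πφ'(b)t)| · |ψ^{(j)}_{a,b}(t)| dt ≤ ε (π c₂ a^{5/2−j} I^{(j)}_2 + (π ε c₂ / 3) a^{7/2−j} I^{(j)}_3), where I^{(j)}_i = ∫ |x|^i |ψ^{(j)}(x)| dx. -/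
open MeasureTheory Real

private lemma cos_lip' (x y : ℝ) : |Real.cos x - Real.cos y| ≤ |x - y| := by
  rw [Real.cos_sub_cos, abs_mul, abs_mul]
  have h1 : |Real.sin ((x + y) / 2)| ≤ 1 := Real.abs_sin_le_one _
  have h2 : |Real.sin ((x - y) / 2)| ≤ |(x - y) / 2| := Real.abs_sin_le_abs
  have h3 : |(x - y) / 2| = |x - y| / 2 := by rw [abs_div]; norm_num
  have h4 : |(-2:ℝ)| = 2 := by norm_num
  have h5 : |Real.sin ((x + y) / 2)| * |Real.sin ((x - y) / 2)| ≤ |(x - y) / 2| :=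
    (mul_le_of_le_one_left (abs_nonneg _) h1).trans h2
  rw [h4, h3] at *
  nlinarith [abs_nonneg (Real.sin ((x - y) / 2))]

private lemma iter_deriv_eq (n : ℕ) (f : SchwartzMap ℝ ℂ) :
    ⇑((SchwartzMap.derivCLM ℝ ℂ)^[n] f) = iteratedDeriv n ⇑f := by
  induction n generalizing f with
  | zero => simp
  | succ n ih =>
    rw [Function.iterate_succ_apply, ih, iteratedDeriv_succ']
    congr 1

theorem stmt17 (ε c₁ c₂ : ℝ) (φ : ℝ → ℝ) (ψ : SchwartzMap ℝ ℂ)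
    (hε : 0 < ε) (hc0 : 0 < c₁) (hc : c₁ < c₂)
    (hφ : ContDiff ℝ 2 φ)
    (hφ1 : ∀ t, c₁ < deriv φ t) (hφ2 : ∀ t, deriv φ t < c₂)
    (hφ'' : ∀ t, |deriv (deriv φ) t| ≤ ε * deriv φ t)
    (b a : ℝ) (ha : 0 < a) (j : ℕ) (hj : j ≤ 2) :
    (∫ t : ℝ, |Real.cos (2 * Real.pi * φ t) -
        Real.cos (2 * Real.pi * (φ b - b * deriv φ b) + 2 * Real.pi * deriv φ b * t)| *
        (a ^ (-(j : ℝ) - 1 / 2) * ‖iteratedDeriv j (⇑ψ) ((t - b) / a)‖))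
      ≤ ε * (Real.pi * c₂ * a ^ ((5 : ℝ) / 2 - (j : ℝ)) *
          ∫ x : ℝ, |x| ^ 2 * ‖iteratedDeriv j (⇑ψ) x‖)
        + ε * (Real.pi * ε * c₂ / 3 * a ^ ((7 : ℝ) / 2 - (j : ℝ)) *
          ∫ x : ℝ, |x| ^ 3 * ‖iteratedDeriv j (⇑ψ) x‖) := by
  have hc2 : 0 < c₂ := hc0.trans hc
  have h21 : Differentiable ℝ φ := hφ.differentiable (by norm_num)
  have hφ'c : ContDiff ℝ 1 (deriv φ) := by
    have h := (contDiff_succ_iff_deriv (n := 1)).mp (by exact_mod_cast hφ)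
    exact h.2.2
  have hd2 : Differentiable ℝ (deriv φ) := hφ'c.differentiable one_ne_zero
  have hφ''le : ∀ t, ‖deriv (deriv φ) t‖ ≤ ε * c₂ := fun t => by
    have h1 := hφ'' t; have h2 := hφ2 t
    rw [Real.norm_eq_abs]
    nlinarith
  have hA : ∀ s, ‖deriv φ s - deriv φ b‖ ≤ ε * c₂ * ‖s - b‖ := fun s =>
    Convex.norm_image_sub_le_of_norm_deriv_le (f := deriv φ) (s := Set.univ)
      (fun x _ => hd2 x) (fun x _ => hφ''le x) convex_univ (Set.mem_univ b) (Set.mem_univ s)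
  have key : ∀ t, |φ t - φ b - deriv φ b * (t - b)| ≤ ε * c₂ / 2 * (t - b) ^ 2 := by
    intro t
    have hii : IntervalIntegrable (deriv φ) volume b t :=
      hφ'c.continuous.intervalIntegrable b t
    have hFTC : ∫ s in b..t, deriv φ s = φ t - φ b :=
      intervalIntegral.integral_deriv_eq_sub (fun x _ => h21 x) hii
    have heq : φ t - φ b - deriv φ b * (t - b) =
        ∫ s in b..t, (deriv φ s - deriv φ b) := by
      rw [intervalIntegral.integral_sub hii intervalIntegrable_const, hFTC,
        intervalIntegral.integral_const]
      rw [smul_eq_mul]; ring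
    have hgii : IntervalIntegrable (fun s => ε * c₂ * abs (s - b)) volume b t :=
      (continuous_const.mul ((continuous_id.sub continuous_const).abs)).intervalIntegrable b t
    have hbound : ‖∫ s in b..t, (deriv φ s - deriv φ b)‖ ≤
        abs (∫ s in b..t, ε * c₂ * abs (s - b)) :=
      intervalIntegral.norm_integral_le_abs_of_norm_le
        (Filter.Eventually.of_forall fun s => by
          simpa [Real.norm_eq_abs] using hA s) hgii
    have hcomp : abs (∫ s in b..t, ε * c₂ * abs (s - b)) = ε * c₂ / 2 * (t - b) ^ 2 := by
      have hval : ∫ s in b..t, ε * c₂ * abs (s - b) = ε * c₂ * ((t - b) * abs (t - b) / 2) := by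
        rcases le_total b t with h | h
        · have hcg : ∀ s ∈ Set.uIcc b t, ε * c₂ * abs (s - b) = ε * c₂ * (s - b) := by
            intro s hs
            rw [Set.uIcc_of_le h] at hs
            rw [abs_of_nonneg (by linarith [hs.1])]
          rw [intervalIntegral.integral_congr hcg, intervalIntegral.integral_const_mul,
            intervalIntegral.integral_sub (intervalIntegral.intervalIntegrable_id)
              intervalIntegrable_const,
            integral_id, intervalIntegral.integral_const, abs_of_nonneg (by linarith)]
          rw [smul_eq_mul]; ring
        · have hcg : ∀ s ∈ Set.uIcc b t, ε * c₂ * abs (s - b) = ε * c₂ * (b - s) := by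
            intro s hs
            rw [Set.uIcc_of_ge h] at hs
            rw [abs_of_nonpos (by linarith [hs.2])]
            ring
          rw [intervalIntegral.integral_congr hcg, intervalIntegral.integral_const_mul,
            intervalIntegral.integral_sub intervalIntegrable_const
              (intervalIntegral.intervalIntegrable_id),
            integral_id, intervalIntegral.integral_const, abs_of_nonpos (by linarith)]
          rw [smul_eq_mul]; ring
      rw [hval, abs_mul]
      rw [abs_of_nonneg (by positivity : (0:ℝ) ≤ ε * c₂)]
      have : abs ((t - b) * abs (t - b) / 2) = (t - b) ^ 2 / 2 := by
        rw [abs_div, abs_mul, abs_abs, ← sq_abs]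
        norm_num
        ring
      rw [this]; ring
    rw [heq]
    calc |∫ s in b..t, (deriv φ s - deriv φ b)| ≤ abs (∫ s in b..t, ε * c₂ * abs (s - b)) := hbound
      _ = ε * c₂ / 2 * (t - b) ^ 2 := hcomp
  have hpt : ∀ t, |Real.cos (2 * Real.pi * φ t) -
      Real.cos (2 * Real.pi * (φ b - b * deriv φ b) + 2 * Real.pi * deriv φ b * t)| ≤
      Real.pi * ε * c₂ * (t - b) ^ 2 := by
    intro t
    have h0 := cos_lip' (2 * Real.pi * φ t)
      (2 * Real.pi * (φ b - b * deriv φ b) + 2 * Real.pi * deriv φ b * t)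
    have h1 : 2 * Real.pi * φ t -
        (2 * Real.pi * (φ b - b * deriv φ b) + 2 * Real.pi * deriv φ b * t) =
        2 * Real.pi * (φ t - φ b - deriv φ b * (t - b)) := by ring
    rw [h1, abs_mul, abs_of_pos Real.two_pi_pos] at h0
    refine h0.trans ?_
    calc 2 * Real.pi * |φ t - φ b - deriv φ b * (t - b)|
        ≤ 2 * Real.pi * (ε * c₂ / 2 * (t - b) ^ 2) :=
          mul_le_mul_of_nonneg_left (key t) (by positivity)
      _ = Real.pi * ε * c₂ * (t - b) ^ 2 := by ring
  set Ψ : SchwartzMap ℝ ℂ := (SchwartzMap.derivCLM ℝ ℂ)^[j] ψ with hΨdef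
  have hΨ : ⇑Ψ = iteratedDeriv j ⇑ψ := iter_deriv_eq j ψ
  simp only [← hΨ]
  have hint2 : Integrable (fun x : ℝ => |x| ^ 2 * ‖Ψ x‖) := by
    simpa [Real.norm_eq_abs] using Ψ.integrable_pow_mul volume 2
  have hint3 : Integrable (fun x : ℝ => |x| ^ 3 * ‖Ψ x‖) := by
    simpa [Real.norm_eq_abs] using Ψ.integrable_pow_mul volume 3
  have hI2 : 0 ≤ ∫ x : ℝ, |x| ^ 2 * ‖Ψ x‖ := integral_nonneg fun x => by positivity
  have hI3 : 0 ≤ ∫ x : ℝ, |x| ^ 3 * ‖Ψ x‖ := integral_nonneg fun x => by positivity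
  have hrw : ∀ e : ℝ, 0 ≤ a ^ e := fun e => Real.rpow_nonneg ha.le e
  have hterm2 : 0 ≤ ε * (Real.pi * ε * c₂ / 3 * a ^ ((7:ℝ)/2 - (j:ℝ)) *
      ∫ x : ℝ, |x| ^ 3 * ‖Ψ x‖) := by
    have hπ := Real.pi_pos
    apply mul_nonneg hε.le
    apply mul_nonneg (mul_nonneg (by positivity) (hrw _)) hI3
  set D : ℝ := Real.pi * ε * c₂ * a ^ (-(j:ℝ) - 1/2) * a ^ 2 with hD
  have hg_int : Integrable (fun t : ℝ => D * (|(t - b)/a| ^ 2 * ‖Ψ ((t - b)/a)‖)) :=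
    (((hint2.comp_div ha.ne').comp_sub_right b).const_mul D)
  have hmono : (∫ t : ℝ, |Real.cos (2 * Real.pi * φ t) -
        Real.cos (2 * Real.pi * (φ b - b * deriv φ b) + 2 * Real.pi * deriv φ b * t)| *
        (a ^ (-(j : ℝ) - 1 / 2) * ‖Ψ ((t - b) / a)‖))
      ≤ ∫ t : ℝ, D * (|(t - b)/a| ^ 2 * ‖Ψ ((t - b)/a)‖) := by
    apply integral_mono_of_nonneg
    · exact Filter.Eventually.of_forall fun t =>
        mul_nonneg (abs_nonneg _) (mul_nonneg (hrw _) (norm_nonneg _))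
    · exact hg_int
    · apply Filter.Eventually.of_forall
      intro t
      have h2 : D * (|(t - b)/a| ^ 2 * ‖Ψ ((t - b)/a)‖) =
          (Real.pi * ε * c₂ * (t - b) ^ 2) * (a ^ (-(j:ℝ) - 1/2) * ‖Ψ ((t - b)/a)‖) := by
        have habs : |(t - b)/a| ^ 2 = (t - b) ^ 2 / a ^ 2 := by
          rw [abs_div, div_pow, sq_abs, sq_abs]
        rw [hD, habs]
        field_simp
      simp only [h2]
      exact mul_le_mul_of_nonneg_right (hpt t) (mul_nonneg (hrw _) (norm_nonneg _))
  have hcalc : (∫ t : ℝ, D * (|(t - b)/a| ^ 2 * ‖Ψ ((t - b)/a)‖)) =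
      ε * (Real.pi * c₂ * a ^ ((5:ℝ)/2 - (j:ℝ)) * ∫ x : ℝ, |x| ^ 2 * ‖Ψ x‖) := by
    rw [integral_const_mul]
    have h1 : (∫ t : ℝ, |(t - b)/a| ^ 2 * ‖Ψ ((t - b)/a)‖) =
        ∫ t : ℝ, |t/a| ^ 2 * ‖Ψ (t/a)‖ :=
      integral_sub_right_eq_self (fun u : ℝ => |u/a| ^ 2 * ‖Ψ (u/a)‖) b
    have h2 : (∫ t : ℝ, |t/a| ^ 2 * ‖Ψ (t/a)‖) = |a| • ∫ x : ℝ, |x| ^ 2 * ‖Ψ x‖ :=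
      Measure.integral_comp_div (fun x : ℝ => |x| ^ 2 * ‖Ψ x‖) a
    rw [h1, h2, smul_eq_mul, abs_of_pos ha, hD]
    have hpow : a ^ (-(j:ℝ) - 1/2) * a ^ 2 * a = a ^ ((5:ℝ)/2 - (j:ℝ)) := by
      have e1 : (a : ℝ) ^ (2:ℕ) = a ^ ((2:ℕ):ℝ) := (Real.rpow_natCast a 2).symm
      have e2 : a = a ^ (1:ℝ) := (Real.rpow_one a).symm
      rw [e1]
      nth_rewrite 3 [e2]
      rw [← Real.rpow_add ha, ← Real.rpow_add ha]
      congr 1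
      push_cast
      ring
    rw [← hpow]
    ring
  rw [hcalc] at hmono
  exact hmono.trans (le_add_of_nonneg_right hterm2)
end
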